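/- Let d ≥ 2 and let N_S, N_O be natural numbers with 1 ≤ N_S < d² and 1 ≤ N_O < d². Let ψ_0, …, ψ_{d²−1} and φ_0, …, φ_{d²−1} be two families of unit vectors in ℂ^d such that in each family the rank-one projections |ψ_y⟩⟨ψ_y| (respectively |φ_x⟩⟨φ_x|) are linearly independent over ℂ (hence each family of projections spans the full space of d×d complex matrices). Let Γ_1, …, Γ_{N_S} and Δ_1, …, Δ_{N_O} be arbitrary d×d complex matrices. Then both of the following hold: (a) there do NOT exist scalars λ_{i,y} ∈ ℂ and effects E_0, …, E_{d²−1} on ℂ^d with Tr((Σ_{i=1}^{N_S} λ_{i,y} Γ_i) · E_x) = |⟨ψ_y, φ_x⟩|² for all x, y ∈ {0,…,d²−1}; and (b) there do NOT exist scalars μ_{i,x} ∈ ℂ and density matrices ρ_0, …, ρ_{d²−1} on ℂ^d with Tr(ρ_y · (Σ_{i=1}^{N_O} μ_{i,x} Δ_i)) = |⟨ψ_y, φ_x⟩|² for all x, y ∈ {0,…,d²−1}. Hence observing the correlations p_Q(0|x,y) = |⟨ψ_y, φ_x⟩|² certifies that at least one of the preparations is not in the span of the free states Γ_i and at least one of the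 operation elements is not in the span of the free operation elements Δ_i. -/

import Mathlib

open Matrix Complex
open scoped ComplexOrder

/-- The rank-one projection (outer product) `|ψ⟩⟨ψ|` of a vector `ψ ∈ ℂ^d`. -/
noncomputable def outer {d : ℕ} (ψ : Fin d → ℂ) : Matrix (Fin d) (Fin d) ℂ :=
  Matrix.of fun i j => ψ i * (starRingEnd ℂ) (ψ j)

/-- The inner product `⟨ψ, φ⟩ = ∑ i, conj (ψ i) * φ i` on `ℂ^d`. -/
noncomputable def qinner {d : ℕ} (ψ φ : Fin d → ℂ) : ℂ :=
  ∑ i, (starRingEnd ℂ) (ψ i) * φ i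

/-- An effect (POVM element) on `ℂ^d`: both `E` and `1 - E` are positive semidefinite. -/
def IsEffect {d : ℕ} (E : Matrix (Fin d) (Fin d) ℂ) : Prop :=
  E.PosSemidef ∧ (1 - E).PosSemidef

/-- A density matrix on `ℂ^d`: positive semidefinite with trace 1. -/
def IsDensityMatrix {d : ℕ} (ρ : Matrix (Fin d) (Fin d) ℂ) : Prop :=
  ρ.PosSemidef ∧ ρ.trace = 1

lemma trace_outer_mul_outer {d : ℕ} (u v : Fin d → ℂ) :
    (outer u * outer v).trace = ((‖qinner u v‖ ^ 2 : ℝ) : ℂ) := by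
  have h1 : ((‖qinner u v‖ ^ 2 : ℝ) : ℂ) = qinner u v * (starRingEnd ℂ) (qinner u v) := by
    rw [Complex.mul_conj]
    norm_cast
    rw [Complex.normSq_eq_norm_sq]
  rw [h1]
  simp only [qinner, map_sum]
  rw [Finset.sum_mul_sum]
  simp only [Matrix.trace, Matrix.diag, Matrix.mul_apply, outer, Matrix.of_apply]
  rw [Finset.sum_comm]
  refine Finset.sum_congr rfl fun j _ => Finset.sum_congr rfl fun i _ => ?_
  simp only [_root_.map_mul, Complex.conj_conj]
  ring

lemma trace_mul_std {d : ℕ} (M : Matrix (Fin d) (Fin d) ℂ) (i j : Fin d) :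
    (M * Matrix.single j i 1).trace = M i j := by
  simp [Matrix.trace, Matrix.diag, Matrix.mul_apply, Matrix.single,
    Finset.sum_ite_eq, Finset.mul_sum, mul_ite, ite_and]

lemma li_trace {d : ℕ} (α β : Fin (d ^ 2) → Fin d → ℂ)
    (hα : LinearIndependent ℂ fun a => outer (α a))
    (hβ : LinearIndependent ℂ fun b => outer (β b)) :
    LinearIndependent ℂ
      (fun a => (fun b => (outer (α a) * outer (β b)).trace : Fin (d ^ 2) → ℂ)) := by
  rw [Fintype.linearIndependent_iff]
  intro c hc
  have hc' : ∀ b, ∑ a, c a * (outer (α a) * outer (β b)).trace = 0 := by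
    intro b
    have := congrFun hc b
    simpa using this
  set M : Matrix (Fin d) (Fin d) ℂ := ∑ a, c a • outer (α a) with hMdef
  have hM : ∀ b, (M * outer (β b)).trace = 0 := by
    intro b
    rw [hMdef, Matrix.sum_mul]
    simp only [Matrix.smul_mul, Matrix.trace_sum, Matrix.trace_smul, smul_eq_mul]
    exact hc' b
  have hspan : Submodule.span ℂ (Set.range fun b => outer (β b)) = ⊤ := by
    apply hβ.span_eq_top_of_card_eq_finrank'
    simp [Module.finrank_matrix, pow_two]
  have hall : ∀ N : Matrix (Fin d) (Fin d) ℂ, (M * N).trace = 0 := by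
    intro N
    have hN : N ∈ Submodule.span ℂ (Set.range fun b => outer (β b)) := by
      rw [hspan]; trivial
    induction hN using Submodule.span_induction with
    | mem x hx => obtain ⟨b, rfl⟩ := hx; exact hM b
    | zero => simp
    | add x y _ _ hx hy => rw [Matrix.mul_add, Matrix.trace_add, hx, hy, add_zero]
    | smul r x _ hx => rw [Matrix.mul_smul, Matrix.trace_smul, hx, smul_zero]
  have hM0 : M = 0 := by
    ext i j
    have := hall (Matrix.single j i 1)
    rw [trace_mul_std] at this
    simpa using this
  have := Fintype.linearIndependent_iff.mp hα c (by rw [← hMdef] at *; exact hM0)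
  exact this

lemma card_le_of_mem_span {N d2 : ℕ} (f : Fin d2 → (Fin d2 → ℂ)) (g : Fin N → (Fin d2 → ℂ))
    (hf : LinearIndependent ℂ f)
    (hmem : ∀ y, f y ∈ Submodule.span ℂ (Set.range g)) : d2 ≤ N := by
  set W := Submodule.span ℂ (Set.range g)
  have hv : LinearIndependent ℂ (fun y => (⟨f y, hmem y⟩ : W)) := by
    apply LinearIndependent.of_comp W.subtype
    convert hf
    rfl
  have h1 : Fintype.card (Fin d2) ≤ Module.finrank ℂ W := hv.fintype_card_le_finrank
  have h2 : Module.finrank ℂ W ≤ Fintype.card (Fin N) := finrank_range_le_card g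
  simpa using h1.trans h2

/-- Corollary 1: with spanning families of pure preparations `ψ_y` and pure effects
`φ_x` (each of size `d²`, with linearly independent projections), the quantum
correlations `p_Q(0|x,y) = |⟨ψ_y, φ_x⟩|²` can be realized neither by preparations in
the span of `N_S < d²` free states `Γ_i`, nor by operations whose POVM elements lie
in the span of `N_O < d²` free operation elements `Δ_i`. -/
theorem stmt_2 (d NS NO : ℕ) (hd : 2 ≤ d)
    (hNS1 : 1 ≤ NS) (hNS2 : NS < d ^ 2) (hNO1 : 1 ≤ NO) (hNO2 : NO < d ^ 2)
    (ψ : Fin (d ^ 2) → Fin d → ℂ) (hψu : ∀ y, qinner (ψ y) (ψ y) = 1)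
    (hψli : LinearIndependent ℂ fun y => outer (ψ y))
    (φ : Fin (d ^ 2) → Fin d → ℂ) (hφu : ∀ x, qinner (φ x) (φ x) = 1)
    (hφli : LinearIndependent ℂ fun x => outer (φ x))
    (Γ : Fin NS → Matrix (Fin d) (Fin d) ℂ)
    (Δ : Fin NO → Matrix (Fin d) (Fin d) ℂ) :
    (¬ ∃ (lam : Fin NS → Fin (d ^ 2) → ℂ)
        (E : Fin (d ^ 2) → Matrix (Fin d) (Fin d) ℂ),
        (∀ x, IsEffect (E x)) ∧
        ∀ (x : Fin (d ^ 2)) (y : Fin (d ^ 2)),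
          ((∑ i, lam i y • Γ i) * E x).trace
            = ((‖qinner (ψ y) (φ x)‖ ^ 2 : ℝ) : ℂ)) ∧
    (¬ ∃ (μ : Fin NO → Fin (d ^ 2) → ℂ)
        (ρ : Fin (d ^ 2) → Matrix (Fin d) (Fin d) ℂ),
        (∀ y, IsDensityMatrix (ρ y)) ∧
        ∀ (x : Fin (d ^ 2)) (y : Fin (d ^ 2)),
          (ρ y * (∑ i, μ i x • Δ i)).trace
            = ((‖qinner (ψ y) (φ x)‖ ^ 2 : ℝ) : ℂ)) := by
  constructor
  · rintro ⟨lam, E, _, heq⟩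
    have key : LinearIndependent ℂ
        (fun y => (fun x => ((‖qinner (ψ y) (φ x)‖ ^ 2 : ℝ) : ℂ) : Fin (d ^ 2) → ℂ)) := by
      have := li_trace ψ φ hψli hφli
      simpa only [trace_outer_mul_outer] using this
    set g : Fin NS → Fin (d ^ 2) → ℂ := fun i x => (Γ i * E x).trace with hg
    have hmem : ∀ y, (fun x => ((‖qinner (ψ y) (φ x)‖ ^ 2 : ℝ) : ℂ))
        ∈ Submodule.span ℂ (Set.range g) := by
      intro y
      have hrepr : (fun x => ((‖qinner (ψ y) (φ x)‖ ^ 2 : ℝ) : ℂ)) = ∑ i, lam i y • g i := by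
        funext x
        rw [← heq x y, Matrix.sum_mul]
        simp [hg, Matrix.smul_mul, Finset.sum_apply]
      rw [hrepr]
      exact Submodule.sum_mem _ fun i _ =>
        Submodule.smul_mem _ _ (Submodule.subset_span ⟨i, rfl⟩)
    have := card_le_of_mem_span _ g key hmem
    omega
  · rintro ⟨μ, ρ, _, heq⟩
    have key : LinearIndependent ℂ
        (fun x => (fun y => ((‖qinner (ψ y) (φ x)‖ ^ 2 : ℝ) : ℂ) : Fin (d ^ 2) → ℂ)) := by
      have := li_trace φ ψ hφli hψli
      have h2 : ∀ x y, (outer (φ x) * outer (ψ y)).trace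
          = ((‖qinner (ψ y) (φ x)‖ ^ 2 : ℝ) : ℂ) := by
        intro x y
        rw [Matrix.trace_mul_comm, trace_outer_mul_outer]
      simpa only [h2] using this
    set g : Fin NO → Fin (d ^ 2) → ℂ := fun i y => (ρ y * Δ i).trace with hg
    have hmem : ∀ x, (fun y => ((‖qinner (ψ y) (φ x)‖ ^ 2 : ℝ) : ℂ))
        ∈ Submodule.span ℂ (Set.range g) := by
      intro x
      have hrepr : (fun y => ((‖qinner (ψ y) (φ x)‖ ^ 2 : ℝ) : ℂ)) = ∑ i, μ i x • g i := by
        funext y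
        rw [← heq x y, Matrix.mul_sum]
        simp [hg, Matrix.mul_smul, Finset.sum_apply]
      rw [hrepr]
      exact Submodule.sum_mem _ fun i _ =>
        Submodule.smul_mem _ _ (Submodule.subset_span ⟨i, rfl⟩)
    have := card_le_of_mem_span _ g key hmem
    omega
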